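/- arXiv:0912.4678 — 2 statements merged into one kernel-verified Lean document; each statement's English description precedes it below -/
import Mathlib

section
/- For every integer n ≥ 1, the alternating sum ∑_{γ=1}^{n} ((-1)^{γ-1}/γ) * C(n-1, γ-1)^2 equals (2^{n-1}/n) * P^{(1,0)}_{n-1}(0), where P^{(1,0)}_{n-1} is the Jacobi polynomial with parameters (1,0). -/
open Finset

/-- Jacobi polynomial `P^{(α,β)}_n(x)` defined via the terminating
hypergeometric representation
`P^{(α,β)}_n(x) = (Γ(n+α+1)/(Γ(n+1)Γ(α+1))) ₂F₁(-n, n+α+β+1; α+1; (1-x)/2)`. -/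
noncomputable def jacobiP (α β : ℝ) (n : ℕ) (x : ℝ) : ℝ :=
  (Real.Gamma (n + α + 1) / (Real.Gamma (n + 1) * Real.Gamma (α + 1))) *
    ∑ k ∈ Finset.range (n + 1),
      (-1 : ℝ) ^ k * (n.choose k) *
        ((ascPochhammer ℝ k).eval (n + α + β + 1) / (ascPochhammer ℝ k).eval (α + 1)) *
        ((1 - x) / 2) ^ k

/-- Legendre polynomial, normalized so that `P_n(1) = 1`. -/
noncomputable def legendreP (n : ℕ) (x : ℝ) : ℝ := jacobiP 0 0 n x

section Aux
open Nat Polynomial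

lemma coeff_one_sub_pow (m k : ℕ) (hk : k ≤ m) :
    ((1 - X : ℝ[X]) ^ m).coeff k = (-1 : ℝ) ^ k * (m.choose k : ℝ) := by
  have h0 : (1 - X : ℝ[X]) = C (-1) * (X + C (-1)) := by
    simp only [map_neg, map_one]; ring
  have h1 : (1 - X : ℝ[X]) ^ m = C ((-1:ℝ)^m) * (X + C (-1)) ^ m := by
    rw [h0, mul_pow, ← C_pow]
  rw [h1, coeff_C_mul, coeff_X_add_C_pow, ← mul_assoc, ← pow_add]
  congr 1
  have h2 : m + (m - k) = k + 2 * (m - k) := by omega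
  rw [h2, pow_add, pow_mul]
  simp

lemma keyA (m : ℕ) :
    ∑ k ∈ range (m + 1), (-1 : ℝ) ^ k * (m.choose k : ℝ) * ((m + 1).choose (k + 1) : ℝ) =
      ∑ k ∈ range (m + 1),
        (-1 : ℝ) ^ k * (m.choose k : ℝ) * ((m + k + 1).choose (k + 1) : ℝ) * 2 ^ (m - k) := by
  have hL : ∑ k ∈ range (m + 1), (-1 : ℝ) ^ k * (m.choose k : ℝ) * ((m + 1).choose (k + 1) : ℝ)
      = ((1 - X : ℝ[X]) ^ m * (1 + X) ^ (m + 1)).coeff m := by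
    rw [coeff_mul, Finset.Nat.sum_antidiagonal_eq_sum_range_succ_mk]
    refine sum_congr rfl fun k hk => ?_
    rw [mem_range] at hk
    rw [coeff_one_sub_pow m k (by omega), coeff_one_add_X_pow]
    have : (m + 1).choose (m - k) = (m + 1).choose (k + 1) := by
      rw [show m - k = (m + 1) - (k + 1) by omega, Nat.choose_symm (by omega)]
    rw [this]
  have hexp : (1 - X : ℝ[X]) ^ m * (1 + X) ^ (m + 1)
      = ∑ j ∈ range (m + 1),
          C ((-1 : ℝ) ^ (j + m) * 2 ^ j * (m.choose j : ℝ)) * (1 + X) ^ (m + 1 + (m - j)) := by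
    have h2 : (1 - X : ℝ[X]) = 2 - (1 + X) := by ring
    rw [h2, sub_pow, sum_mul]
    refine sum_congr rfl fun j hj => ?_
    rw [pow_add]
    simp only [map_mul, map_pow, map_neg, map_one, map_natCast, map_ofNat]
    ring
  have hR : ((1 - X : ℝ[X]) ^ m * (1 + X) ^ (m + 1)).coeff m
      = ∑ j ∈ range (m + 1),
          (-1 : ℝ) ^ (j + m) * 2 ^ j * (m.choose j : ℝ) * ((m + 1 + (m - j)).choose m : ℝ) := by
    rw [hexp, finset_sum_coeff]
    refine sum_congr rfl fun j hj => ?_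
    rw [coeff_C_mul, coeff_one_add_X_pow]
  rw [hL, hR]
  conv_rhs => rw [← Finset.sum_range_reflect]
  refine sum_congr rfl fun j hj => ?_
  rw [mem_range] at hj
  have hj' : j ≤ m := by omega
  simp only [show m + 1 - 1 - j = m - j from by omega]
  rw [show m - (m - j) = j from by omega, Nat.choose_symm hj',
    show m + (m - j) + 1 = m + 1 + (m - j) from by omega]
  have e5 : (m + 1 + (m - j)).choose (m - j + 1) = (m + 1 + (m - j)).choose m := by
    rw [show m - j + 1 = (m + 1 + (m - j)) - m from by omega]
    exact Nat.choose_symm (by omega)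
  rw [e5]
  have e6 : (-1 : ℝ) ^ (m - j) = (-1) ^ (j + m) := by
    rw [show j + m = (m - j) + 2 * j from by omega, pow_add, pow_mul]; simp
  rw [e6]; ring

lemma jacobi_eval (m : ℕ) :
    jacobiP 1 0 m 0 = ∑ k ∈ range (m + 1),
      (-1 : ℝ) ^ k * (m.choose k : ℝ) * ((m + k + 1).choose (k + 1) : ℝ) * (1 / 2) ^ k := by
  unfold jacobiP
  rw [show ((m : ℝ) + 1 + 1) = ((m + 1 : ℕ) : ℝ) + 1 by push_cast; ring,
    Real.Gamma_nat_eq_factorial, show ((m : ℝ) + 1) = ((m : ℕ) : ℝ) + 1 from rfl,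
    Real.Gamma_nat_eq_factorial, show ((1 : ℝ) + 1) = 2 by norm_num, Real.Gamma_two, mul_sum]
  refine sum_congr rfl fun k hk => ?_
  rw [show ((m : ℝ) + 1 + 0 + 1) = (((m + 2 : ℕ) : ℕ) : ℝ) by push_cast; ring,
    ← Nat.cast_ascFactorial,
    show Polynomial.eval (2:ℝ) (ascPochhammer ℝ k) = ((2:ℕ).ascFactorial k : ℝ) by
      rw [Nat.cast_ascFactorial]; norm_num]
  have hA : ((m + 1)! : ℝ) * ((m + 2).ascFactorial k : ℝ) = ((m + 1 + k)! : ℝ) := by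
    exact_mod_cast congrArg (Nat.cast : ℕ → ℝ) (Nat.factorial_mul_ascFactorial (m + 1) k)
  have hB : ((2 : ℕ).ascFactorial k : ℝ) = ((k + 1)! : ℝ) := by
    have := Nat.factorial_mul_ascFactorial 1 k
    simp only [Nat.factorial_one, one_mul] at this
    rw [this, show 1 + k = k + 1 from by omega]
  have hC : (((m + k + 1).choose (k + 1) : ℕ) : ℝ) * ((k + 1)! : ℝ) * ((m)! : ℝ)
      = ((m + k + 1)! : ℝ) := by
    have h := Nat.choose_mul_factorial_mul_factorial (show k + 1 ≤ m + k + 1 by omega)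
    rw [show m + k + 1 - (k + 1) = m from by omega] at h
    exact_mod_cast congrArg (Nat.cast : ℕ → ℝ) h
  have hA' : ((m + 2).ascFactorial k : ℝ) = ((m + 1 + k)! : ℝ) / ((m + 1)! : ℝ) := by
    rw [eq_div_iff (by positivity), mul_comm]; exact hA
  rw [hA', hB]
  have h1 : ((m + 1)! : ℝ) = ((m : ℝ) + 1) * (m)! := by
    rw [Nat.factorial_succ]; push_cast; ring
  have h2 : ((m + 1 + k)! : ℝ) = (((m + k + 1).choose (k + 1) : ℕ) : ℝ) * ((k + 1)! : ℝ) * ((m)! : ℝ) := by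
    rw [hC, show m + 1 + k = m + k + 1 from by omega]
  rw [h1, h2]
  have hf1 : ((m)! : ℝ) ≠ 0 := by positivity
  have hf2 : ((k + 1)! : ℝ) ≠ 0 := by positivity
  have hm1 : ((m : ℝ) + 1) ≠ 0 := by positivity
  field_simp
  ring

theorem alt_sum_eq_jacobi (n : ℕ) (hn : 1 ≤ n) :
    ∑ γ ∈ Finset.Icc 1 n, ((-1 : ℝ) ^ (γ - 1) / (γ : ℝ)) * ((n - 1).choose (γ - 1) : ℝ) ^ 2 =
      (2 ^ (n - 1) / (n : ℝ)) * jacobiP 1 0 (n - 1) 0 := by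
  obtain ⟨m, rfl⟩ : ∃ m, n = m + 1 := ⟨n - 1, by omega⟩
  simp only [Nat.add_sub_cancel]
  rw [← Finset.Ico_add_one_right_eq_Icc, Finset.sum_Ico_eq_sum_range]
  simp only [show m + 1 + 1 - 1 = m + 1 from by omega, show ∀ i : ℕ, 1 + i - 1 = i from fun i => by omega]
  have hm1 : ((m : ℝ) + 1) ≠ 0 := by positivity
  have hL : ∑ i ∈ range (m + 1), (-1 : ℝ) ^ i / ((1 + i : ℕ) : ℝ) * (m.choose i : ℝ) ^ 2
      = ((m : ℝ) + 1)⁻¹ *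
        ∑ i ∈ range (m + 1), (-1 : ℝ) ^ i * (m.choose i : ℝ) * ((m + 1).choose (i + 1) : ℝ) := by
    rw [mul_sum]
    refine sum_congr rfl fun i hi => ?_
    have h := Nat.add_one_mul_choose_eq m i
    have h' : ((m : ℝ) + 1) * (m.choose i : ℝ) = ((m + 1).choose (i + 1) : ℝ) * ((i : ℝ) + 1) := by
      exact_mod_cast congrArg (Nat.cast : ℕ → ℝ) h
    have hi1 : ((1 + i : ℕ) : ℝ) = (i : ℝ) + 1 := by push_cast; ring
    rw [hi1]
    have hine : ((i : ℝ) + 1) ≠ 0 := by positivity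
    field_simp
    linear_combination ((m.choose i : ℝ)) * h'
  have hR : (2 : ℝ) ^ m / ((m : ℝ) + 1) * jacobiP 1 0 m 0
      = ((m : ℝ) + 1)⁻¹ * ∑ k ∈ range (m + 1),
          (-1 : ℝ) ^ k * (m.choose k : ℝ) * ((m + k + 1).choose (k + 1) : ℝ) * 2 ^ (m - k) := by
    rw [jacobi_eval, mul_sum, mul_sum]
    refine sum_congr rfl fun k hk => ?_
    rw [mem_range] at hk
    have h2 : (2 : ℝ) ^ (m - k) * 2 ^ k = 2 ^ m := by
      rw [← pow_add]; congr 1; omega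
    have h2k : ((2 : ℝ)) ^ k ≠ 0 := by positivity
    field_simp
    have h3 : ((1 : ℝ) / 2) ^ k * 2 ^ k = 1 := by rw [← mul_pow]; norm_num
    linear_combination (-(m.choose k : ℝ) * ((m + k + 1).choose (k + 1) : ℝ) * (1 / 2) ^ k) * h2 + ((m.choose k : ℝ) * ((m + k + 1).choose (k + 1) : ℝ) * 2 ^ (m - k)) * h3
  push_cast at hL hR ⊢
  rw [hL, hR, keyA]

end Aux
end

section
/- Define p(0) = 1 and p(n) = (1/2)[P_{n-1}(0)^2 + P_n(0)^2] for n ≥ 1, where P_m is the m-th Legendre polynomial. Then for every integer m ≥ 1, p(2m) = p(2m+1) = (1/2^{4m+1}) * C(2m, m)^2. -/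
open Finset

/-- Return probability `p_{2n}(0)` of the symmetric 1D Hadamard walk. -/
noncomputable def hadamardReturnProb (n : ℕ) : ℝ :=
  if n = 0 then 1
  else (1 / 2) * (legendreP (n - 1) 0 ^ 2 + legendreP n 0 ^ 2)

open Finset Polynomial

lemma coeff_one_sub_X_pow (n j : ℕ) :
    ((1 - X : ℝ[X]) ^ n).coeff j = (-1 : ℝ) ^ j * n.choose j := by
  have h : (1 - X : ℝ[X]) ^ n
      = ∑ k ∈ Finset.range (n + 1), C ((-1 : ℝ) ^ k * n.choose k) * X ^ k := by
    rw [sub_eq_add_neg, add_comm, add_pow]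
    refine Finset.sum_congr rfl fun k hk => ?_
    rw [neg_pow, one_pow, map_mul, map_pow]
    simp [mul_comm, mul_assoc, mul_left_comm]
  rw [h, finset_sum_coeff]
  simp only [coeff_C_mul, coeff_X_pow, mul_ite, mul_one, mul_zero]
  rw [Finset.sum_ite_eq (Finset.range (n + 1)) j fun x => (-1 : ℝ) ^ x * (n.choose x : ℝ)]
  by_cases hj : j ∈ Finset.range (n + 1)
  · rw [if_pos hj]
  · rw [if_neg hj]
    rw [Finset.mem_range, not_lt] at hj
    rw [Nat.choose_eq_zero_of_lt hj]
    simp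

lemma coeff_one_sub_X_sq_pow (n : ℕ) :
    ((1 - X ^ 2 : ℝ[X]) ^ n).coeff n
      = if Even n then (-1 : ℝ) ^ (n / 2) * n.choose (n / 2) else 0 := by
  have h : (1 - X ^ 2 : ℝ[X]) ^ n
      = ∑ k ∈ Finset.range (n + 1), C ((-1 : ℝ) ^ k * n.choose k) * X ^ (2 * k) := by
    rw [sub_eq_add_neg, add_comm, add_pow]
    refine Finset.sum_congr rfl fun k hk => ?_
    rw [neg_pow, one_pow, map_mul, map_pow, ← pow_mul]
    simp [mul_comm, mul_assoc, mul_left_comm]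
  rw [h, finset_sum_coeff]
  simp only [coeff_C_mul, coeff_X_pow, mul_ite, mul_one, mul_zero]
  rcases Nat.even_or_odd n with he | ho
  · obtain ⟨m, hm⟩ := he
    have hn : n = 2 * m := by omega
    subst hn
    rw [if_pos (by exact ⟨m, by omega⟩)]
    rw [Finset.sum_eq_single m]
    · rw [if_pos rfl]
      rw [Nat.mul_div_cancel_left m (by norm_num)]
    · intro k hk hkm
      rw [if_neg (by omega)]
    · intro hmem
      exact absurd (Finset.mem_range.mpr (by omega)) hmem
  · obtain ⟨m, hm⟩ := ho
    rw [if_neg (by simp [Nat.odd_iff.mp ⟨m, hm⟩, Nat.even_iff])]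
    apply Finset.sum_eq_zero
    intro k hk
    rw [if_neg (by omega)]

lemma alt_choose_sq (n : ℕ) :
    ∑ j ∈ Finset.range (n + 1), (-1 : ℝ) ^ j * (n.choose j : ℝ) ^ 2
      = if Even n then (-1 : ℝ) ^ (n / 2) * n.choose (n / 2) else 0 := by
  have key : ((1 - X : ℝ[X]) ^ n * (1 + X) ^ n).coeff n
      = ∑ j ∈ Finset.range (n + 1), (-1 : ℝ) ^ j * (n.choose j : ℝ) ^ 2 := by
    rw [coeff_mul, Finset.Nat.sum_antidiagonal_eq_sum_range_succ_mk]
    refine Finset.sum_congr rfl fun k hk => ?_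
    rw [coeff_one_sub_X_pow, coeff_one_add_X_pow]
    rw [Finset.mem_range] at hk
    rw [Nat.choose_symm (by omega)]
    ring
  rw [← key, ← mul_pow]
  have : ((1 - X) * (1 + X) : ℝ[X]) = 1 - X ^ 2 := by ring
  rw [this, coeff_one_sub_X_sq_pow]

lemma vandermonde_range (n k : ℕ) (hk : k ≤ n) :
    (n + k).choose k = ∑ j ∈ Finset.range (n + 1), n.choose j * k.choose j := by
  rw [Nat.add_choose_eq, Finset.Nat.sum_antidiagonal_eq_sum_range_succ_mk]
  have h1 : ∑ j ∈ Finset.range (n + 1), n.choose j * k.choose j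
      = ∑ j ∈ Finset.range (k + 1), n.choose j * k.choose j := by
    symm
    apply Finset.sum_subset (Finset.range_subset_range.mpr (by omega))
    intro j _ hj
    rw [Finset.mem_range, not_lt] at hj
    rw [(Nat.choose_eq_zero_of_lt (by omega) : k.choose j = 0), mul_zero]
  rw [h1]
  refine Finset.sum_congr rfl fun j hj => ?_
  rw [Finset.mem_range] at hj
  rw [Nat.choose_symm (by omega)]

lemma neg_half_binomial (m : ℕ) :
    ∑ i ∈ Finset.range (m + 1), (-(1/2) : ℝ) ^ i * m.choose i = (1/2) ^ m := by
  have h := add_pow (-(1/2) : ℝ) 1 m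
  rw [show (-(1/2) + 1 : ℝ) = 1/2 by norm_num] at h
  rw [h]
  exact Finset.sum_congr rfl fun i _ => by rw [one_pow, mul_one]

lemma innerSumAux (n j : ℕ) (hj : j ≤ n) :
    ∑ k ∈ Finset.range (n + 1), (-1 : ℝ) ^ k * (1/2) ^ k * (n.choose k) * (k.choose j)
      = (-1 : ℝ) ^ j * (1/2) ^ n * (n.choose j) := by
  set f : ℕ → ℝ := fun k => (-1 : ℝ) ^ k * (1/2) ^ k * (n.choose k) * (k.choose j) with hf
  have hsplit : ∑ k ∈ Finset.range (n + 1), f k = ∑ k ∈ Finset.Ico j (n + 1), f k := by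
    rw [Finset.range_eq_Ico, ← Finset.sum_Ico_consecutive f (Nat.zero_le j) (by omega)]
    have h0 : ∑ k ∈ Finset.Ico 0 j, f k = 0 := by
      apply Finset.sum_eq_zero
      intro k hk
      rw [Finset.mem_Ico] at hk
      simp [hf, Nat.choose_eq_zero_of_lt hk.2]
    rw [h0, zero_add]
  rw [hsplit, Finset.sum_Ico_eq_sum_range]
  have hrw : ∀ i ∈ Finset.range (n + 1 - j), f (j + i)
      = ((-1 : ℝ) ^ j * (1/2) ^ j * (n.choose j)) * ((-(1/2) : ℝ) ^ i * ((n - j).choose i)) := by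
    intro i hi
    rw [Finset.mem_range] at hi
    have hle : j + i ≤ n := by omega
    have hmul : n.choose (j + i) * (j + i).choose j = n.choose j * (n - j).choose i := by
      rw [Nat.choose_mul (n := n) (by omega), Nat.add_sub_cancel_left]
    simp only [hf]
    have : ((n.choose (j + i) : ℝ)) * ((j + i).choose j : ℝ) = (n.choose j : ℝ) * ((n - j).choose i : ℝ) := by
      exact_mod_cast congrArg (Nat.cast : ℕ → ℝ) hmul
    rw [pow_add, pow_add, neg_pow (1/2 : ℝ) i]
    linear_combination ((-1 : ℝ) ^ j * (-1 : ℝ) ^ i * ((1/2 : ℝ) ^ j * (1/2 : ℝ) ^ i)) * this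
  rw [Finset.sum_congr rfl hrw, ← Finset.mul_sum]
  have hnj : n + 1 - j = (n - j) + 1 := by omega
  rw [hnj, neg_half_binomial (n - j)]
  have : ((1:ℝ)/2) ^ j * (1/2) ^ (n - j) = (1/2) ^ n := by
    rw [← pow_add]
    congr 1
    omega
  linear_combination ((-1 : ℝ) ^ j * (n.choose j : ℝ)) * this

lemma legendre_sum_swap (n : ℕ) :
    ∑ k ∈ Finset.range (n + 1),
        (-1 : ℝ) ^ k * (n.choose k) * ((n + k).choose k) * (1 / 2) ^ k
      = (1/2) ^ n * ∑ j ∈ Finset.range (n + 1), (-1 : ℝ) ^ j * (n.choose j : ℝ) ^ 2 := by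
  have step1 : ∀ k ∈ Finset.range (n + 1),
      (-1 : ℝ) ^ k * (n.choose k) * ((n + k).choose k) * (1 / 2) ^ k
        = ∑ j ∈ Finset.range (n + 1),
            (n.choose j : ℝ) * ((-1 : ℝ) ^ k * (1/2) ^ k * (n.choose k) * (k.choose j)) := by
    intro k hk
    rw [Finset.mem_range] at hk
    rw [vandermonde_range n k (by omega)]
    push_cast
    rw [Finset.mul_sum, Finset.sum_mul]
    refine Finset.sum_congr rfl fun j hj => ?_
    ring
  rw [Finset.sum_congr rfl step1, Finset.sum_comm]
  rw [Finset.mul_sum]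
  refine Finset.sum_congr rfl fun j hj => ?_
  rw [Finset.mem_range] at hj
  rw [← Finset.mul_sum (Finset.range (n + 1))
    (fun k => (-1 : ℝ) ^ k * (1/2) ^ k * (n.choose k) * (k.choose j)) ((n.choose j : ℝ)),
    innerSumAux n j (by omega)]
  ring

lemma legendreP_zero_eq (n : ℕ) :
    legendreP n 0 = ∑ k ∈ Finset.range (n + 1),
      (-1 : ℝ) ^ k * (n.choose k) * ((n + k).choose k) * (1 / 2) ^ k := by
  unfold legendreP jacobiP
  have hpre : Real.Gamma ((n : ℝ) + 0 + 1) / (Real.Gamma ((n : ℝ) + 1) * Real.Gamma (0 + 1)) = 1 := by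
    rw [add_zero, zero_add, Real.Gamma_one, mul_one, div_self]
    rw [Real.Gamma_nat_eq_factorial]
    positivity
  rw [hpre, one_mul]
  refine Finset.sum_congr rfl fun k hk => ?_
  have h1 : ((n : ℝ) + 0 + 0 + 1) = ((n + 1 : ℕ) : ℝ) := by push_cast; ring
  have h2 : ((0 : ℝ) + 1) = ((1 : ℕ) : ℝ) := by norm_num
  rw [h1, h2, ← ascPochhammer_eval_cast, ← ascPochhammer_eval_cast,
    ascPochhammer_nat_eq_ascFactorial, ascPochhammer_nat_eq_ascFactorial,
    Nat.ascFactorial_eq_factorial_mul_choose, Nat.one_ascFactorial]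
  have hfac : ((k.factorial : ℝ)) ≠ 0 := by positivity
  push_cast
  rw [mul_comm ((k.factorial : ℝ)) _, mul_div_assoc, div_self hfac]
  norm_num

lemma legendreP_zero_val (n : ℕ) :
    legendreP n 0 = (1/2 : ℝ) ^ n *
      (if Even n then (-1 : ℝ) ^ (n / 2) * n.choose (n / 2) else 0) := by
  rw [legendreP_zero_eq, legendre_sum_swap, alt_choose_sq]

lemma legendreP_zero_odd (k : ℕ) (hk : ¬ Even k) : legendreP k 0 = 0 := by
  rw [legendreP_zero_val, if_neg hk, mul_zero]

lemma legendreP_zero_even (m : ℕ) :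
    legendreP (2 * m) 0 = (1/2 : ℝ) ^ (2 * m) * ((-1 : ℝ) ^ m * ((2 * m).choose m : ℝ)) := by
  have h : Even (2 * m) := ⟨m, by ring⟩
  rw [legendreP_zero_val, if_pos h, Nat.mul_div_cancel_left m (by norm_num : 0 < 2)]

lemma even_sq_val (m : ℕ) :
    legendreP (2 * m) 0 ^ 2 = (1 / 2 ^ (4 * m)) * ((2 * m).choose m : ℝ) ^ 2 := by
  rw [legendreP_zero_even, mul_pow, mul_pow, ← pow_mul, ← pow_mul]
  have h1 : ((-1 : ℝ)) ^ (m * 2) = 1 := by rw [mul_comm m 2, pow_mul]; norm_num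
  rw [h1, one_mul, show 2 * m * 2 = 4 * m by ring, div_pow, one_pow]

theorem return_prob_explicit (m : ℕ) (hm : 1 ≤ m) :
    hadamardReturnProb (2 * m) = (1 / 2 ^ (4 * m + 1)) * ((2 * m).choose m : ℝ) ^ 2 ∧
      hadamardReturnProb (2 * m + 1) = (1 / 2 ^ (4 * m + 1)) * ((2 * m).choose m : ℝ) ^ 2 := by
  have hodd1 : legendreP (2 * m - 1) 0 = 0 := by
    apply legendreP_zero_odd
    rintro ⟨r, hr⟩; omega
  have hodd2 : legendreP (2 * m + 1) 0 = 0 := by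
    apply legendreP_zero_odd
    rintro ⟨r, hr⟩; omega
  constructor
  · rw [hadamardReturnProb, if_neg (by omega), hodd1, even_sq_val]
    rw [pow_succ]
    ring
  · rw [hadamardReturnProb, if_neg (by omega), show 2 * m + 1 - 1 = 2 * m by omega,
      hodd2, even_sq_val]
    rw [pow_succ]
    ring
end
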